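/- The group obtained from the presentation ⟨a, b, c | a² = b² = c² = (ab)³ = (bc)³ = (ca)³ = 1, abac = 1⟩ is isomorphic to the symmetric group S₃. -/

import Mathlib

/-- Relations ⟨a,b,c | a²=b²=c²=(ab)³=(bc)³=(ca)³=1, abac=1⟩. -/
def s3Rels : Set (FreeGroup (Fin 3)) :=
  { (FreeGroup.of 0) ^ 2, (FreeGroup.of 1) ^ 2, (FreeGroup.of 2) ^ 2,
    (FreeGroup.of 0 * FreeGroup.of 1) ^ 3,
    (FreeGroup.of 1 * FreeGroup.of 2) ^ 3,
    (FreeGroup.of 2 * FreeGroup.of 0) ^ 3,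
    FreeGroup.of 0 * FreeGroup.of 1 * FreeGroup.of 0 * FreeGroup.of 2 }

namespace S3ProofAux

abbrev G := PresentedGroup s3Rels

lemma rel_one {r : FreeGroup (Fin 3)} (h : r ∈ s3Rels) :
    PresentedGroup.mk s3Rels r = 1 :=
  (QuotientGroup.eq_one_iff r).mpr (Subgroup.subset_normalClosure h)

noncomputable def x : G := PresentedGroup.of 0
noncomputable def y : G := PresentedGroup.of 1
noncomputable def z : G := PresentedGroup.of 2

lemma hx : x * x = 1 := by
  have := rel_one (show (FreeGroup.of 0)^2 ∈ s3Rels by simp [s3Rels])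
  simpa [sq, map_mul, x, PresentedGroup.of] using this

lemma hy : y * y = 1 := by
  have := rel_one (show (FreeGroup.of 1)^2 ∈ s3Rels by simp [s3Rels])
  simpa [sq, map_mul, y, PresentedGroup.of] using this

lemma hxy3 : (x * y) * (x * y) * (x * y) = 1 := by
  have := rel_one (show (FreeGroup.of 0 * FreeGroup.of 1)^3 ∈ s3Rels by simp [s3Rels])
  simpa [pow_succ, map_mul, map_pow, mul_assoc, x, y, PresentedGroup.of] using this.symm.trans rfl |>.symm

lemma habac : x * y * x * z = 1 := by
  have := rel_one (show FreeGroup.of 0 * FreeGroup.of 1 * FreeGroup.of 0 * FreeGroup.of 2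
    ∈ s3Rels by simp [s3Rels])
  simpa [map_mul, x, y, z, PresentedGroup.of] using this

lemma hz : z = x * y * x := by
  have h1 : (x * y * x) * z = 1 := by simpa [mul_assoc] using habac
  have h2 : (x * y * x) * (x * y * x) = 1 := by
    calc x * y * x * (x * y * x) = x * y * (x * x) * y * x := by group
    _ = x * (y * y) * x := by rw [hx]; group
    _ = x * x := by rw [hy]; group
    _ = 1 := hx
  calc z = ((x*y*x) * (x*y*x)) * z := by rw [h2, one_mul]
  _ = (x*y*x) * ((x*y*x) * z) := by group
  _ = x*y*x := by rw [h1, mul_one]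

lemma hxyxy : (x * y) * (x * y) = y * x := by
  have h : (y * x) * (x * y) = 1 := by
    calc (y * x) * (x * y) = y * (x * x) * y := by group
    _ = y * y := by rw [hx]; group
    _ = 1 := hy
  calc (x*y)*(x*y) = 1 * ((x*y)*(x*y)) := by rw [one_mul]
  _ = (y*x) * (((x*y)*(x*y))*(x*y)) := by rw [← h]; group
  _ = (y*x) * 1 := by rw [hxy3]
  _ = y*x := mul_one _

lemma hyxy : y * x * y = x * y * x := by
  have := hxyxy
  calc y * x * y = (x * x) * y * x * y := by rw [hx]; group
  _ = x * ((x*y)*(x*y)) := by group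
  _ = x * (y * x) := by rw [hxyxy]
  _ = x * y * x := by group

def T : Set G := {1, x, y, x*y, y*x, x*y*x}

lemma Tmulx : ∀ u ∈ T, u * x ∈ T := by
  rintro u (rfl|rfl|rfl|rfl|rfl|rfl)
  · simp [T]
  · rw [hx]; simp [T]
  · right; right; right; right; left; rfl
  · have : x * y * x ∈ T := by right; right; right; right; right; rfl
    exact this
  · have : y * x * x = y := by rw [mul_assoc, hx, mul_one]
    rw [this]; right; right; left; rfl
  · have : x * y * x * x = x * y := by rw [mul_assoc, hx, mul_one]
    rw [this]; right; right; right; left; rfl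

lemma Tmuly : ∀ u ∈ T, u * y ∈ T := by
  rintro u (rfl|rfl|rfl|rfl|rfl|rfl)
  · simp [T]
  · right; right; right; left; rfl
  · rw [hy]; simp [T]
  · have : x * y * y = x := by rw [mul_assoc, hy, mul_one]
    rw [this]; right; left; rfl
  · have : y * x * y = x * y * x := hyxy
    rw [this]; right; right; right; right; right; rfl
  · have : x * y * x * y = y * x := by rw [show x*y*x*y = (x*y)*(x*y) by group, hxyxy]
    rw [this]; right; right; right; right; left; rfl

lemma Tmul : ∀ u ∈ T, ∀ v ∈ T, u * v ∈ T := by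
  rintro u hu v (rfl|rfl|rfl|rfl|rfl|rfl)
  · simpa using hu
  · exact Tmulx u hu
  · exact Tmuly u hu
  · rw [show u * (x*y) = (u*x)*y by group]; exact Tmuly _ (Tmulx u hu)
  · rw [show u * (y*x) = (u*y)*x by group]; exact Tmulx _ (Tmuly u hu)
  · rw [show u * (x*y*x) = ((u*x)*y)*x by group]
    exact Tmulx _ (Tmuly _ (Tmulx u hu))

lemma Tinv : ∀ u ∈ T, u⁻¹ ∈ T := by
  rintro u (rfl|rfl|rfl|rfl|rfl|rfl)
  · simp [T]
  · rw [inv_eq_of_mul_eq_one_right hx]; right; left; rfl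
  · rw [inv_eq_of_mul_eq_one_right hy]; right; right; left; rfl
  · have h : (x*y) * (y*x) = 1 := by
      calc (x*y)*(y*x) = x * (y*y) * x := by group
      _ = x * x := by rw [hy]; group
      _ = 1 := hx
    rw [inv_eq_of_mul_eq_one_right h]; right; right; right; right; left; rfl
  · have h : (y*x) * (x*y) = 1 := by
      calc (y*x)*(x*y) = y * (x*x) * y := by group
      _ = y * y := by rw [hx]; group
      _ = 1 := hy
    rw [inv_eq_of_mul_eq_one_right h]; right; right; right; left; rfl
  · have h : (x*y*x) * (x*y*x) = 1 := by
      calc (x*y*x)*(x*y*x) = x * y * (x*x) * y * x := by group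
      _ = x * (y*y) * x := by rw [hx]; group
      _ = x * x := by rw [hy]; group
      _ = 1 := hx
    rw [inv_eq_of_mul_eq_one_right h]; right; right; right; right; right; rfl

lemma all_mem : ∀ g : G, g ∈ T := by
  intro g
  induction g using QuotientGroup.induction_on with
  | H w =>
    induction w using FreeGroup.induction_on with
    | C1 => exact Or.inl rfl
    | of i =>
      fin_cases i
      · exact Or.inr (Or.inl rfl)
      · exact Or.inr (Or.inr (Or.inl rfl))
      · show z ∈ T
        rw [hz]; right; right; right; right; right; rfl
    | inv_of i h =>
      exact Tinv _ h
    | mul u v hu hv =>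
      exact Tmul _ hu _ hv

noncomputable def fgen : Fin 3 → Equiv.Perm (Fin 3) :=
  ![Equiv.swap 0 1, Equiv.swap 1 2, Equiv.swap 0 2]

lemma frels : ∀ r ∈ s3Rels, FreeGroup.lift fgen r = 1 := by
  intro r hr
  simp only [s3Rels, Set.mem_insert_iff, Set.mem_singleton_iff] at hr
  rcases hr with rfl|rfl|rfl|rfl|rfl|rfl|rfl <;>
    simp only [map_pow, map_mul, FreeGroup.lift_apply_of, fgen] <;> decide

noncomputable def f : G →* Equiv.Perm (Fin 3) := PresentedGroup.toGroup frels

lemma fx : f x = Equiv.swap 0 1 := PresentedGroup.toGroup.of frels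
lemma fy : f y = Equiv.swap 1 2 := PresentedGroup.toGroup.of frels

lemma f_inj : Function.Injective f := by
  rw [injective_iff_map_eq_one]
  intro g hg
  rcases all_mem g with rfl|rfl|rfl|rfl|rfl|rfl
  · rfl
  · rw [fx] at hg; exact absurd hg (by decide)
  · rw [fy] at hg; exact absurd hg (by decide)
  · rw [map_mul, fx, fy] at hg; exact absurd hg (by decide)
  · rw [map_mul, fy, fx] at hg; exact absurd hg (by decide)
  · rw [map_mul, map_mul, fx, fy] at hg; exact absurd hg (by decide)

lemma f_surj : Function.Surjective f := by
  intro σ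
  have h : σ = 1 ∨ σ = Equiv.swap 0 1 ∨ σ = Equiv.swap 1 2 ∨
      σ = Equiv.swap 0 1 * Equiv.swap 1 2 ∨ σ = Equiv.swap 1 2 * Equiv.swap 0 1 ∨
      σ = Equiv.swap 0 1 * Equiv.swap 1 2 * Equiv.swap 0 1 := by
    revert σ; decide
  rcases h with rfl|rfl|rfl|rfl|rfl|rfl
  · exact ⟨1, map_one f⟩
  · exact ⟨x, fx⟩
  · exact ⟨y, fy⟩
  · exact ⟨x * y, by rw [map_mul, fx, fy]⟩
  · exact ⟨y * x, by rw [map_mul, fy, fx]⟩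
  · exact ⟨x * y * x, by rw [map_mul, map_mul, fx, fy]⟩

end S3ProofAux

/-- The presented group is isomorphic to the symmetric group S₃. -/
theorem presented_group_iso_S3 :
    Nonempty (PresentedGroup s3Rels ≃* Equiv.Perm (Fin 3)) :=
  ⟨MulEquiv.ofBijective S3ProofAux.f ⟨S3ProofAux.f_inj, S3ProofAux.f_surj⟩⟩
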